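/- For every n ≥ 1 and b₁, b₂ ∈ [0,1], the matrix Lⁿ is stochastic: Lⁿ(i,j;k,l) ≥ 0 for all i,j,k,l ∈ {0,1}ⁿ, and for every i,j ∈ {0,1}ⁿ one has Σ_{k,l ∈ {0,1}ⁿ} Lⁿ(i,j;k,l) = 1. -/

import Mathlib

/-- Exponents of the indeterminates `b₁` (resp. `b₂`) appearing in a formal weight:
`e` for exponent zero (factor `1`), `pl` for the factor `bᵢ`, `mi` for the factor `1 - bᵢ`. -/
inductive Eps : Type
  | e : Eps
  | pl : Eps
  | mi : Eps
deriving DecidableEq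

instance : Fintype Eps :=
  ⟨{Eps.e, Eps.pl, Eps.mi}, fun x => by cases x <;> simp⟩

/-- The 10-element set of formal weights: `none` represents `0`, and `some (ε₁, ε₂)`
represents the monomial `f₁(ε₁) f₂(ε₂)`. -/
abbrev Wt : Type := Option (Eps × Eps)

/-- The join operation on exponents: `a ∨ a = a`, `e ∨ a = a ∨ e = a`, and the
clash `{+, −}` gives `none` (i.e. the factor `0`). -/
def Eps.vee : Eps → Eps → Option Eps
  | .e, a => some a
  | a, .e => some a
  | .pl, .pl => some .pl
  | .mi, .mi => some .mi
  | .pl, .mi => none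
  | .mi, .pl => none

/-- The Boolean-type product `*` on the formal weight set `Wt`. -/
def wmul : Wt → Wt → Wt
  | none, _ => none
  | _, none => none
  | some (a₁, a₂), some (c₁, c₂) =>
    match a₁.vee c₁, a₂.vee c₂ with
    | some x, some y => some (x, y)
    | _, _ => none

/-- Evaluation of an exponent of `b₁`: `f₁(e) = 1`, `f₁(+) = b₁`, `f₁(−) = 1 - b₁`. -/
def f1 (b1 : ℝ) : Eps → ℝ
  | .e => 1
  | .pl => b1
  | .mi => 1 - b1

/-- Evaluation of an exponent of `b₂`: `f₂(e) = 1`, `f₂(+) = b₂`, `f₂(−) = 1 - b₂`. -/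
def f2 (b2 : ℝ) : Eps → ℝ
  | .e => 1
  | .pl => b2
  | .mi => 1 - b2

/-- The evaluation map `ev_{b₁,b₂} : W → ℝ`. -/
def ev (b1 b2 : ℝ) : Wt → ℝ
  | none => 0
  | some (x, y) => f1 b1 x * f2 b2 y

/-- The formal one-colored vertex weights `L̂¹(i, j; k, l) ∈ W`
(`i` = bottom input, `j` = left input, `k` = top output, `l` = right output,
with `true` standing for `1`). -/
def Lhat1 : Bool → Bool → Bool → Bool → Wt
  | true, false, true, false => some (.e, .e)
  | false, true, false, true => some (.e, .e)
  | false, false, false, false => some (.e, .pl)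
  | false, false, true, true => some (.e, .mi)
  | true, true, true, true => some (.pl, .e)
  | true, true, false, false => some (.mi, .e)
  | _, _, _, _ => none

/-- The `r`-fold projection `s_r(x) = (x₁ + ⋯ + x_r) mod 2` of a vector `x ∈ {0,1}ⁿ`
(here `r : Fin n` stands for the `1`-indexed level `r + 1`). -/
def sproj {n : ℕ} (x : Fin n → Bool) (r : Fin n) : Bool :=
  decide ((∑ t ∈ Finset.univ.filter (fun t : Fin n => t ≤ r),
    (if x t then (1 : ℕ) else 0)) % 2 = 1)

/-- The formal `n`-colored vertex weight
`L̂ⁿ(i, j; k, l) = ∏*_{r=1}^n L̂¹(s_r(i), s_r(j); s_r(k), s_r(l)) ∈ W`,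
where the product is taken with respect to the Boolean-type product `*`. -/
def Lhatn {n : ℕ} (i j k l : Fin n → Bool) : Wt :=
  (List.ofFn (fun r : Fin n =>
    Lhat1 (sproj i r) (sproj j r) (sproj k r) (sproj l r))).foldr wmul (some (.e, .e))

/-- The real `n`-colored vertex weight `Lⁿ(i, j; k, l) = ev_{b₁,b₂}(L̂ⁿ(i, j; k, l))`. -/
def Ln (b1 b2 : ℝ) {n : ℕ} (i j k l : Fin n → Bool) : ℝ :=
  ev b1 b2 (Lhatn i j k l)


section StochasticAux

lemma sum_swap4_aux {α β : Type*} [Fintype α] [Fintype β] (F : Bool → α → Bool → β → ℝ) :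
    ∑ p : Bool × α, ∑ q : Bool × β, F p.1 p.2 q.1 q.2
    = ∑ a : α, ∑ b : β, ∑ x : Bool, ∑ y : Bool, F x a y b := by
  simp only [Fintype.sum_prod_type]
  rw [Finset.sum_comm]
  refine Finset.sum_congr rfl fun a _ => ?_
  have h1 : ∀ x : Bool, ∑ y : Bool, ∑ b : β, F x a y b
      = ∑ b : β, ∑ y : Bool, F x a y b := fun x => Finset.sum_comm
  simp only [h1]
  exact Finset.sum_comm

set_option maxHeartbeats 1000000 in
lemma key1_aux (b1 b2 : ℝ) (p q : Bool) (w : Wt) :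
    ∑ a : Bool, ∑ c : Bool, ev b1 b2 (wmul (Lhat1 p q a c) w) = ev b1 b2 w := by
  rcases w with _ | ⟨x, y⟩
  · have h : ∀ v : Wt, wmul v none = none := by rintro (_ | ⟨_, _⟩) <;> rfl
    simp [h, ev]
  · cases p <;> cases q <;> cases x <;> cases y <;>
      simp [Fintype.sum_bool, Lhat1, wmul, Eps.vee, ev, f1, f2] <;> ring

set_option maxHeartbeats 2000000 in
lemma sum_fold_aux (b1 b2 : ℝ) :
    ∀ (n : ℕ) (pq : Fin n → Bool × Bool) (w : Wt),
    ∑ a : Fin n → Bool, ∑ c : Fin n → Bool,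
      ev b1 b2 ((List.ofFn fun r => Lhat1 (pq r).1 (pq r).2 (a r) (c r)).foldr wmul w)
      = ev b1 b2 w := by
  intro n
  induction n with
  | zero => intro pq w; simp
  | succ n ih =>
    intro pq w
    rw [← Equiv.sum_comp (Fin.consEquiv (fun _ : Fin (n+1) => Bool))]
    have hinner : ∀ g : (Fin (n+1) → Bool) → ℝ,
        (∑ c : Fin (n+1) → Bool, g c)
        = ∑ q : Bool × (Fin n → Bool), g (Fin.cons q.1 q.2) := by
      intro g
      rw [← Equiv.sum_comp (Fin.consEquiv (fun _ : Fin (n+1) => Bool))]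
      rfl
    simp only [hinner]
    simp only [Fin.consEquiv_apply, List.ofFn_succ, List.foldr_cons, Fin.cons_zero, Fin.cons_succ]
    refine (sum_swap4_aux (fun (x : Bool) (a : Fin n → Bool) (y : Bool) (b : Fin n → Bool) =>
        ev b1 b2 (wmul (Lhat1 (pq 0).1 (pq 0).2 x y)
        ((List.ofFn fun i : Fin n =>
          Lhat1 (pq i.succ).1 (pq i.succ).2 (a i) (b i)).foldr wmul w)))).trans ?_
    simp only [key1_aux]
    exact ih (fun r => pq r.succ) w

lemma sproj_zero_aux {n : ℕ} (x : Fin n → Bool) (h : 0 < n) :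
    sproj x ⟨0, h⟩ = x ⟨0, h⟩ := by
  have hf : Finset.univ.filter (fun t : Fin n => t ≤ ⟨0, h⟩) = {⟨0, h⟩} := by
    ext t
    simp [Fin.le_def, Fin.ext_iff]
    try omega
  rw [sproj, hf, Finset.sum_singleton]
  cases x ⟨0, h⟩ <;> simp

lemma sproj_succ_aux {n : ℕ} (x : Fin n → Bool) (m : ℕ) (h : m + 1 < n) :
    sproj x ⟨m + 1, h⟩ = xor (x ⟨m + 1, h⟩) (sproj x ⟨m, Nat.lt_of_succ_lt h⟩) := by
  have hf : Finset.univ.filter (fun t : Fin n => t ≤ ⟨m + 1, h⟩)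
      = insert ⟨m + 1, h⟩ (Finset.univ.filter (fun t : Fin n => t ≤ ⟨m, Nat.lt_of_succ_lt h⟩)) := by
    ext t
    simp [Fin.le_def, Fin.ext_iff]
    omega
  have hnot : (⟨m + 1, h⟩ : Fin n) ∉
      Finset.univ.filter (fun t : Fin n => t ≤ ⟨m, Nat.lt_of_succ_lt h⟩) := by
    simp [Fin.le_def]
  rw [sproj, hf, Finset.sum_insert hnot]
  set s := ∑ t ∈ Finset.univ.filter (fun t : Fin n => t ≤ ⟨m, Nat.lt_of_succ_lt h⟩),
    (if x t then (1 : ℕ) else 0) with hs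
  rw [sproj, ← hs]
  cases hx : x ⟨m + 1, h⟩ <;> simp only [if_true, if_false, Bool.true_xor, Bool.false_xor]
  · simp
  · rcases Nat.mod_two_eq_zero_or_one s with h2 | h2 <;> simp [Nat.add_mod, h2]

lemma sproj_bijective_aux {n : ℕ} : Function.Bijective (sproj (n := n)) := by
  rw [Fintype.bijective_iff_injective_and_card]
  refine ⟨?_, rfl⟩
  intro x y hxy
  funext r
  obtain ⟨m, hm⟩ := r
  induction m with
  | zero =>
    have := congrFun hxy ⟨0, hm⟩
    rwa [sproj_zero_aux x hm, sproj_zero_aux y hm] at this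
  | succ m _ =>
    have h1 := congrFun hxy ⟨m + 1, hm⟩
    have h2 := congrFun hxy ⟨m, Nat.lt_of_succ_lt hm⟩
    rw [sproj_succ_aux x m hm, sproj_succ_aux y m hm, h2] at h1
    cases hb : sproj y ⟨m, Nat.lt_of_succ_lt hm⟩ <;> rw [hb] at h1 <;>
      revert h1 <;> cases x ⟨m+1, hm⟩ <;> cases y ⟨m+1, hm⟩ <;> simp

lemma ev_nonneg_aux {b1 b2 : ℝ} (hb1 : b1 ∈ Set.Icc (0 : ℝ) 1) (hb2 : b2 ∈ Set.Icc (0 : ℝ) 1)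
    (w : Wt) : 0 ≤ ev b1 b2 w := by
  obtain ⟨hb1a, hb1b⟩ := hb1
  obtain ⟨hb2a, hb2b⟩ := hb2
  rcases w with _ | ⟨x, y⟩
  · simp [ev]
  · cases x <;> cases y <;> simp [ev, f1, f2] <;> nlinarith

end StochasticAux

/-- Stochasticity of the matrices `Lⁿ`: for `b₁, b₂ ∈ [0,1]`, all entries are nonnegative
and, for any input lines `i, j ∈ {0,1}ⁿ`, the weights of all possible output lines sum to 1. -/
theorem Ln_stochastic (n : ℕ) (hn : 1 ≤ n)
    (b1 b2 : ℝ) (hb1 : b1 ∈ Set.Icc (0 : ℝ) 1) (hb2 : b2 ∈ Set.Icc (0 : ℝ) 1) :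
    (∀ i j k l : Fin n → Bool, 0 ≤ Ln b1 b2 i j k l) ∧
    (∀ i j : Fin n → Bool,
      ∑ k : Fin n → Bool, ∑ l : Fin n → Bool, Ln b1 b2 i j k l = 1) := by
  constructor
  · intro i j k l
    exact ev_nonneg_aux hb1 hb2 _
  · intro i j
    have hF : ∀ k l : Fin n → Bool, Ln b1 b2 i j k l
        = (fun u v : Fin n → Bool => ev b1 b2 ((List.ofFn fun r =>
            Lhat1 (sproj i r) (sproj j r) (u r) (v r)).foldr wmul (some (.e, .e))))
          (sproj k) (sproj l) := fun k l => rfl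
    simp only [hF]
    have h1 : ∀ k : Fin n → Bool,
        ∑ l : Fin n → Bool, (fun u v : Fin n → Bool => ev b1 b2 ((List.ofFn fun r =>
            Lhat1 (sproj i r) (sproj j r) (u r) (v r)).foldr wmul (some (.e, .e))))
          (sproj k) (sproj l)
        = ∑ v : Fin n → Bool, (fun u v : Fin n → Bool => ev b1 b2 ((List.ofFn fun r =>
            Lhat1 (sproj i r) (sproj j r) (u r) (v r)).foldr wmul (some (.e, .e))))
          (sproj k) v := fun k => sproj_bijective_aux.sum_comp
            (fun v : Fin n → Bool => ev b1 b2 ((List.ofFn fun r =>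
              Lhat1 (sproj i r) (sproj j r) (sproj k r) (v r)).foldr wmul (some (.e, .e))))
    simp only [h1]
    rw [sproj_bijective_aux.sum_comp (fun u : Fin n → Bool =>
      ∑ v : Fin n → Bool, ev b1 b2 ((List.ofFn fun r =>
        Lhat1 (sproj i r) (sproj j r) (u r) (v r)).foldr wmul (some (.e, .e))))]
    have := sum_fold_aux b1 b2 n (fun r => (sproj i r, sproj j r)) (some (.e, .e))
    simp only at this
    rw [this]
    simp [ev, f1, f2]
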